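/- The backtracking deconvolution update is correct: if v_i ∈ X has Bernoulli parameter p < 1 and D^X_j = P(Σ_{v∈X} I_v = j), then the distribution of Σ_{v∈X∖{v_i}} I_v satisfies D^{X∖{v_i}}_0 = D^X_0/(1−p) and D^{X∖{v_i}}_j = (D^X_j − p·D^{X∖{v_i}}_{j−1})/(1−p) for 0 < j < |X|, and D^{X∖{v_i}}_j = 0 for j ≥ |X|. -/

import Mathlib

/-- `distAt p Y j = P(∑_{v∈Y} I_v = j)` for mutually independent Bernoulli random
variables `I_v` with success probabilities `p v`. -/
noncomputable def distAt {ι : Type*} [DecidableEq ι] (p : ι → ℝ) (Y : Finset ι)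
    (j : ℕ) : ℝ :=
  ∑ T ∈ Y.powerset.filter (fun T => T.card = j),
    (∏ v ∈ T, p v) * ∏ v ∈ Y \ T, (1 - p v)

lemma distAt_eq_powersetCard {ι : Type*} [DecidableEq ι] (p : ι → ℝ) (Y : Finset ι)
    (j : ℕ) : distAt p Y j = ∑ T ∈ Y.powersetCard j,
      (∏ v ∈ T, p v) * ∏ v ∈ Y \ T, (1 - p v) := by
  rw [distAt, Finset.powersetCard_eq_filter]

lemma distAt_zero_of_lt {ι : Type*} [DecidableEq ι] (p : ι → ℝ) {Y : Finset ι}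
    {j : ℕ} (h : Y.card < j) : distAt p Y j = 0 := by
  rw [distAt_eq_powersetCard, Finset.powersetCard_eq_empty.2 h, Finset.sum_empty]

lemma distAt_insert_zero {ι : Type*} [DecidableEq ι] (p : ι → ℝ) {s : Finset ι}
    {a : ι} (ha : a ∉ s) :
    distAt p (insert a s) 0 = (1 - p a) * distAt p s 0 := by
  simp only [distAt_eq_powersetCard, Finset.powersetCard_zero, Finset.sum_singleton,
    Finset.prod_empty, Finset.sdiff_empty, one_mul]
  rw [Finset.prod_insert ha]

lemma distAt_insert_succ {ι : Type*} [DecidableEq ι] (p : ι → ℝ) {s : Finset ι}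
    {a : ι} (ha : a ∉ s) (j : ℕ) :
    distAt p (insert a s) (j + 1)
      = (1 - p a) * distAt p s (j + 1) + p a * distAt p s j := by
  simp only [distAt_eq_powersetCard]
  rw [Finset.powersetCard_succ_insert ha, Finset.sum_union, Finset.sum_image]
  · congr 1
    · rw [Finset.mul_sum]
      refine Finset.sum_congr rfl fun T hT => ?_
      have hTs : T ⊆ s := (Finset.mem_powersetCard.1 hT).1
      have haT : a ∉ T := fun h => ha (hTs h)
      have haTd : a ∉ s \ T := fun h => ha (Finset.mem_sdiff.1 h).1
      rw [Finset.insert_sdiff_of_notMem _ haT, Finset.prod_insert haTd]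
      ring
    · rw [Finset.mul_sum]
      refine Finset.sum_congr rfl fun T hT => ?_
      have hTs : T ⊆ s := (Finset.mem_powersetCard.1 hT).1
      have haT : a ∉ T := fun h => ha (hTs h)
      rw [Finset.prod_insert haT]
      have : insert a s \ insert a T = s \ T := by
        rw [Finset.insert_sdiff_insert]
        rw [Finset.sdiff_insert_of_notMem ha]
      rw [this]; ring
  · intro T hT U hU hTU
    have haT : a ∉ T := fun h => ha ((Finset.mem_powersetCard.1 hT).1 h)
    have haU : a ∉ U := fun h => ha ((Finset.mem_powersetCard.1 hU).1 h)
    have := congrArg (Finset.erase · a) hTU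
    simpa [Finset.erase_insert_eq_erase, Finset.erase_eq_of_notMem haT,
      Finset.erase_eq_of_notMem haU] using this
  · rw [Finset.disjoint_left]
    intro T hT hT2
    obtain ⟨U, hU, rfl⟩ := Finset.mem_image.1 hT2
    have haU : a ∉ U := fun h => ha ((Finset.mem_powersetCard.1 hU).1 h)
    exact ha ((Finset.mem_powersetCard.1 hT).1 (Finset.mem_insert_self a U))

/-- the backtracking deconvolution update is correct: if `v_i ∈ X` has
Bernoulli parameter `p := p(v_i) < 1`, then
`D^{X∖{v_i}}_0 = D^X_0/(1−p)`,
`D^{X∖{v_i}}_j = (D^X_j − p·D^{X∖{v_i}}_{j−1})/(1−p)` for `0 < j < |X|`, and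
`D^{X∖{v_i}}_j = 0` for `j ≥ |X|`. -/
theorem deconvolution_update {ι : Type*} [DecidableEq ι] (p : ι → ℝ)
    (hp : ∀ v, 0 ≤ p v ∧ p v ≤ 1) (X : Finset ι) (hX : X.Nonempty)
    (vi : ι) (hvi : vi ∈ X) (hp1 : p vi < 1) :
    distAt p (X.erase vi) 0 = distAt p X 0 / (1 - p vi) ∧
    (∀ j : ℕ, 0 < j → j < X.card →
      distAt p (X.erase vi) j
        = (distAt p X j - p vi * distAt p (X.erase vi) (j - 1)) / (1 - p vi)) ∧
    (∀ j : ℕ, X.card ≤ j → distAt p (X.erase vi) j = 0) := by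
  have hne : (1 : ℝ) - p vi ≠ 0 := by linarith
  have hXi : X = insert vi (X.erase vi) := (Finset.insert_erase hvi).symm
  have hni : vi ∉ X.erase vi := Finset.notMem_erase _ _
  have hcard : X.card = (X.erase vi).card + 1 :=
    (Finset.card_erase_add_one hvi).symm
  refine ⟨?_, ?_, ?_⟩
  · rw [hXi, distAt_insert_zero p hni]
    field_simp
    rw [Finset.erase_insert hni]
  · intro j hj0 hjc
    obtain ⟨k, rfl⟩ := Nat.exists_eq_add_of_lt hj0
    simp only [Nat.zero_add, Nat.add_sub_cancel]
    rw [hXi, distAt_insert_succ p hni k, ← hXi]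
    field_simp
    ring
  · intro j hj
    exact distAt_zero_of_lt p (by omega)
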